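/- Let Ψ ∈ ℝ^{N×n_p} with ΨᵀΨ positive definite, D ∈ ℝ^{n_r×n_p} with linearly independent rows (so DDᵀ and D(ΨᵀΨ)^{-1}Dᵀ are invertible), Z ∈ ℝ^N, and d ∈ ℝ^{n_r}. For μ > 0 the matrix ΨᵀΨ + μDᵀD is positive definite, hence invertible, and the relaxed estimator θ̂_rCLS(μ) = (ΨᵀΨ + μDᵀD)^{-1}(ΨᵀZ + μDᵀd) is well defined. Then θ̂_rCLS(μ) converges, as μ → ∞, to the equality-constrained least-squares estimator θ̂_CLS = 𝒫θ̂_LS + (I_{n_p} − 𝒫)d̄, where θ̂_LS = (ΨᵀΨ)^{-1}ΨᵀZ, 𝒫 = I_{n_p} − LD, L = (ΨᵀΨ)^{-1}Dᵀ[D(ΨᵀΨ)^{-1}Dᵀ]^{-1}, and d̄ = Dᵀ(DDᵀ)^{-1}d. -/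

import Mathlib

open Matrix Filter

private lemma vecMul_eq_sum' {m n : ℕ} (x : Fin m → ℝ) (B : Matrix (Fin m) (Fin n) ℝ) :
    x ᵥ* B = ∑ i, x i • B i := by
  ext j
  simp [Matrix.vecMul, dotProduct, Finset.sum_apply]

private lemma posDef_conj' {m n : ℕ} {A : Matrix (Fin n) (Fin n) ℝ} (hA : A.PosDef)
    (B : Matrix (Fin m) (Fin n) ℝ) (hB : LinearIndependent ℝ (fun i : Fin m => B i)) :
    (B * A * Bᵀ).PosDef := by
  have hPSD : (B * A * Bᵀ).PosSemidef := by
    have := hA.posSemidef.mul_mul_conjTranspose_same B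
    simpa [Matrix.conjTranspose_eq_transpose_of_trivial] using this
  refine Matrix.PosDef.of_dotProduct_mulVec_pos hPSD.isHermitian fun x hx => ?_
  have hw : x ᵥ* B ≠ 0 := by
    intro h0
    apply hx
    funext i
    refine Fintype.linearIndependent_iff.mp hB x ?_ i
    rw [← vecMul_eq_sum', h0]
  have key : star x ⬝ᵥ (B * A * Bᵀ) *ᵥ x = star (x ᵥ* B) ⬝ᵥ A *ᵥ (x ᵥ* B) := by
    simp only [star_trivial]
    rw [← Matrix.mulVec_mulVec, ← Matrix.mulVec_mulVec, Matrix.dotProduct_mulVec,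
      Matrix.mulVec_transpose]
  rw [key]
  exact hA.dotProduct_mulVec_pos hw

private lemma psd_smul' {n : ℕ} {M : Matrix (Fin n) (Fin n) ℝ} (hM : M.PosSemidef) {μ : ℝ}
    (hμ : 0 ≤ μ) : (μ • M).PosSemidef := by
  refine Matrix.PosSemidef.of_dotProduct_mulVec_nonneg ?_ fun x => ?_
  · have h := hM.1
    simp only [Matrix.IsHermitian, Matrix.conjTranspose_smul, star_trivial, h.eq]
  · rw [Matrix.smul_mulVec, dotProduct_smul, smul_eq_mul]
    exact mul_nonneg hμ (hM.dotProduct_mulVec_nonneg x)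

set_option maxHeartbeats 1000000 in
/-- For `μ > 0` the matrix `ΨᵀΨ + μDᵀD` is positive definite (hence invertible), so the
relaxed estimator `θ̂_rCLS(μ) = (ΨᵀΨ + μDᵀD)⁻¹(ΨᵀZ + μDᵀd)` is well defined, and as
`μ → ∞` it converges to the equality-constrained least-squares estimator
`θ̂_CLS = 𝒫θ̂_LS + (I − 𝒫)d̄`. -/
theorem stmt_13 {N np nr : ℕ}
    (Ψ : Matrix (Fin N) (Fin np) ℝ) (D : Matrix (Fin nr) (Fin np) ℝ)
    (Z : Fin N → ℝ) (d : Fin nr → ℝ)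
    (hΨ : (Ψᵀ * Ψ).PosDef)
    (hD : LinearIndependent ℝ (fun i : Fin nr => D i))
    (θLS : Fin np → ℝ) (hθLS : θLS = ((Ψᵀ * Ψ)⁻¹ * Ψᵀ).mulVec Z)
    (L : Matrix (Fin np) (Fin nr) ℝ)
    (hL : L = (Ψᵀ * Ψ)⁻¹ * Dᵀ * (D * (Ψᵀ * Ψ)⁻¹ * Dᵀ)⁻¹)
    (P : Matrix (Fin np) (Fin np) ℝ) (hP : P = 1 - L * D)
    (dbar : Fin np → ℝ) (hdbar : dbar = (Dᵀ * (D * Dᵀ)⁻¹).mulVec d)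
    (θCLS : Fin np → ℝ) (hθCLS : θCLS = P.mulVec θLS + (1 - P).mulVec dbar) :
    IsUnit (D * Dᵀ) ∧ IsUnit (D * (Ψᵀ * Ψ)⁻¹ * Dᵀ) ∧
    (∀ μ : ℝ, 0 < μ → (Ψᵀ * Ψ + μ • (Dᵀ * D)).PosDef) ∧
    Tendsto
      (fun μ : ℝ =>
        ((Ψᵀ * Ψ + μ • (Dᵀ * D))⁻¹).mulVec (Ψᵀ.mulVec Z + μ • Dᵀ.mulVec d))
      atTop (nhds θCLS) := by
  set A : Matrix (Fin np) (Fin np) ℝ := Ψᵀ * Ψ with hAdef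
  have hAu : IsUnit A.det := hΨ.det_pos.ne'.isUnit
  have hAinv : A⁻¹.PosDef := hΨ.inv
  -- `D * Dᵀ` is positive definite
  have hDDT : (D * Dᵀ).PosDef := by
    have := posDef_conj' Matrix.PosDef.one D hD
    rwa [Matrix.mul_one] at this
  -- `G := D A⁻¹ Dᵀ` is positive definite
  set G : Matrix (Fin nr) (Fin nr) ℝ := D * A⁻¹ * Dᵀ with hGdef
  have hG : G.PosDef := posDef_conj' hAinv D hD
  have hGu : IsUnit G.det := hG.det_pos.ne'.isUnit
  -- positive definiteness for all μ > 0
  have hDtD : (Dᵀ * D).PosSemidef := by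
    have := Matrix.posSemidef_conjTranspose_mul_self D
    simpa [Matrix.conjTranspose_eq_transpose_of_trivial] using this
  have hPD : ∀ μ : ℝ, 0 < μ → (A + μ • (Dᵀ * D)).PosDef := fun μ hμ =>
    hΨ.add_posSemidef (psd_smul' hDtD hμ.le)
  refine ⟨hDDT.isUnit, hG.isUnit, hPD, ?_⟩
  -- the auxiliary function
  set w : Fin nr → ℝ := D *ᵥ θLS - d with hwdef
  set g : ℝ → (Fin np → ℝ) :=
    fun ν => θLS - (A⁻¹ * Dᵀ * (ν • (1 : Matrix (Fin nr) (Fin nr) ℝ) + G)⁻¹) *ᵥ w with hgdef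
  -- g 0 = θCLS
  have hg0 : g 0 = θCLS := by
    have hDdbar : D *ᵥ dbar = d := by
      rw [hdbar, Matrix.mulVec_mulVec, ← Matrix.mul_assoc,
        Matrix.mul_nonsing_inv _ hDDT.det_pos.ne'.isUnit, Matrix.one_mulVec]
    have h1P : (1 : Matrix (Fin np) (Fin np) ℝ) - P = L * D := by rw [hP, sub_sub_cancel]
    have : θCLS = θLS - L *ᵥ (D *ᵥ θLS) + L *ᵥ d := by
      rw [hθCLS, h1P, hP, Matrix.sub_mulVec, Matrix.one_mulVec, ← Matrix.mulVec_mulVec,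
        ← Matrix.mulVec_mulVec, hDdbar]
    rw [this, hgdef]
    simp only [zero_smul, zero_add]
    rw [← hL, hwdef, Matrix.mulVec_sub]
    abel
  -- continuity of g at 0
  have hcont : ContinuousAt g 0 := by
    have hm : Continuous fun ν : ℝ => ν • (1 : Matrix (Fin nr) (Fin nr) ℝ) + G :=
      (continuous_id.smul continuous_const).add continuous_const
    have hinv : ContinuousAt (fun ν : ℝ => (ν • (1 : Matrix (Fin nr) (Fin nr) ℝ) + G)⁻¹) 0 := by
      have hdet : ContinuousAt Ring.inverse G.det := by
        rw [Ring.inverse_eq_inv']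
        exact continuousAt_inv₀ hG.det_pos.ne'
      refine ContinuousAt.comp ?_ hm.continuousAt
      show ContinuousAt Inv.inv ((0 : ℝ) • (1 : Matrix (Fin nr) (Fin nr) ℝ) + G)
      rw [zero_smul, zero_add]
      exact continuousAt_matrix_inv G hdet
    have houter : Continuous fun M : Matrix (Fin nr) (Fin nr) ℝ =>
        θLS - (A⁻¹ * Dᵀ * M) *ᵥ w :=
      continuous_const.sub
        (((continuous_const.matrix_mul continuous_id).matrix_mulVec continuous_const))
    exact (houter.continuousAt.comp hinv)
  -- the limit along ν = μ⁻¹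
  have hlim : Tendsto (fun μ : ℝ => g μ⁻¹) atTop (nhds θCLS) := by
    rw [← hg0]
    exact hcont.tendsto.comp tendsto_inv_atTop_zero
  -- eventual equality
  refine hlim.congr' ?_
  filter_upwards [eventually_gt_atTop (0 : ℝ)] with μ hμ
  set S : Matrix (Fin nr) (Fin nr) ℝ := μ⁻¹ • (1 : Matrix (Fin nr) (Fin nr) ℝ) + G with hSdef
  have hS : S.PosDef := Matrix.PosDef.posSemidef_add (psd_smul' Matrix.PosSemidef.one (inv_nonneg.mpr hμ.le)) hG
  have hSu : IsUnit S.det := hS.det_pos.ne'.isUnit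
  set M : Matrix (Fin np) (Fin np) ℝ := A + μ • (Dᵀ * D) with hMdef
  have hM : M.PosDef := hPD μ hμ
  have hMu : IsUnit M.det := hM.det_pos.ne'.isUnit
  -- key matrix identity
  have key : M * (A⁻¹ * Dᵀ * S⁻¹) = μ • Dᵀ := by
    have e1 : M * (A⁻¹ * Dᵀ) = Dᵀ + μ • (Dᵀ * G) := by
      rw [hMdef, Matrix.add_mul, ← Matrix.mul_assoc, Matrix.mul_nonsing_inv _ hAu,
        Matrix.one_mul, Matrix.smul_mul]
      congr 1
      rw [hGdef]
      simp only [Matrix.mul_assoc]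
    have e2 : Dᵀ + μ • (Dᵀ * G) = Dᵀ * (μ • S) := by
      rw [hSdef, smul_add, smul_smul, mul_inv_cancel₀ hμ.ne', one_smul, Matrix.mul_add,
        Matrix.mul_one, Matrix.mul_smul]
    rw [← Matrix.mul_assoc, e1, e2, Matrix.mul_assoc, Matrix.smul_mul, Matrix.mul_smul,
      Matrix.mul_nonsing_inv _ hSu, Matrix.mul_one]
  -- M *ᵥ g μ⁻¹ = ΨᵀZ + μ Dᵀd
  have hAθ : A *ᵥ θLS = Ψᵀ *ᵥ Z := by
    rw [hθLS, Matrix.mulVec_mulVec, ← Matrix.mul_assoc, Matrix.mul_nonsing_inv _ hAu,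
      Matrix.one_mul]
  have hvec : M *ᵥ g μ⁻¹ = Ψᵀ *ᵥ Z + μ • Dᵀ *ᵥ d := by
    rw [hgdef]
    simp only
    rw [Matrix.mulVec_sub, Matrix.mulVec_mulVec, ← hSdef, key, hMdef, Matrix.add_mulVec,
      hAθ, Matrix.smul_mulVec, Matrix.smul_mulVec, ← Matrix.mulVec_mulVec,
      hwdef, Matrix.mulVec_sub, smul_sub]
    abel
  -- conclude
  show g μ⁻¹ = (M⁻¹) *ᵥ (Ψᵀ *ᵥ Z + μ • Dᵀ *ᵥ d)
  rw [← hvec, Matrix.mulVec_mulVec, Matrix.nonsing_inv_mul _ hMu, Matrix.one_mulVec]
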